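/- Let q be a prime power and F_q the finite field with q elements. If X and Y are subsets of Mat_3(F_q) (the set of all 3×3 matrices over F_q) satisfying sqrt(|X|·|Y|) > q^6 + q^3 + 2, then there exist matrices A ∈ X and B ∈ Y such that B - A is invertible, i.e., B - A ∈ GL_3(F_q). -/

import Mathlib

open Matrix Finset

set_option linter.unusedSectionVars false
set_option maxHeartbeats 1000000

namespace SpectralGapAux

attribute [local instance] Classical.propDecidable

variable {F : Type*} [Field F] [Fintype F] [DecidableEq F]
variable {ψ : AddChar F ℂ}

/-- dot-with-c as a linear map -/
def dotL (c : Fin 3 → F) : (Fin 3 → F) →ₗ[F] F where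
  toFun v := v ⬝ᵥ c
  map_add' x y := add_dotProduct x y c
  map_smul' t x := smul_dotProduct t x c

/-- Frobenius pairing of matrices -/
def pairF (C G : Matrix (Fin 3) (Fin 3) F) : F := ∑ i, C i ⬝ᵥ G i

/-- pairing with M, linear in the first argument -/
def pairL (M : Matrix (Fin 3) (Fin 3) F) : Matrix (Fin 3) (Fin 3) F →ₗ[F] F where
  toFun C := pairF C M
  map_add' x y := by
    unfold pairF
    rw [← Finset.sum_add_distrib]
    refine Finset.sum_congr rfl fun i _ => ?_
    rw [show (x + y) i = x i + y i from rfl, add_dotProduct]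
  map_smul' t x := by
    show pairF (t • x) M = t • pairF x M
    unfold pairF
    rw [smul_eq_mul, Finset.mul_sum]
    refine Finset.sum_congr rfl fun i _ => ?_
    rw [show (t • x) i = t • x i from rfl, smul_dotProduct, smul_eq_mul]

variable {ψ : AddChar F ℂ}

/-- the fundamental cancellation lemma -/
lemma char_sum_zero (hψ : ψ ≠ 1) {M : Type*} [AddCommGroup M] [Module F M] [Fintype M]
    (φ : M →ₗ[F] F) (hφ : ∃ x, φ x ≠ 0) : ∑ x : M, ψ (φ x) = 0 := by
  obtain ⟨x0, hx0⟩ := hφ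
  obtain ⟨y, hy⟩ := AddChar.ne_one_iff.mp hψ
  have h1 : ψ (φ ((y / φ x0) • x0)) ≠ 1 := by
    rw [LinearMap.map_smul, smul_eq_mul, div_mul_cancel₀ _ hx0]
    exact hy
  set x1 := (y / φ x0) • x0 with hx1
  have key : ∑ x : M, ψ (φ x) = (∑ x : M, ψ (φ x)) * ψ (φ x1) := by
    calc ∑ x : M, ψ (φ x) = ∑ x : M, ψ (φ (x + x1)) :=
          (Fintype.sum_bijective (· + x1) (Equiv.addRight x1).bijective _ _ (fun x => rfl)).symm
      _ = ∑ x : M, ψ (φ x) * ψ (φ x1) := by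
          simp only [map_add, AddChar.map_add_eq_mul]
      _ = (∑ x : M, ψ (φ x)) * ψ (φ x1) := by rw [Finset.sum_mul]
  have := sub_eq_zero.mpr key
  rw [← mul_one (∑ x : M, ψ (φ x)), mul_assoc, one_mul, ← mul_sub] at this
  rcases mul_eq_zero.mp this with h | h
  · exact h
  · exact absurd (sub_eq_zero.mp h).symm h1

lemma sum_mulshift (hψ : ψ ≠ 1) (d : F) :
    ∑ t : F, ψ (t * d) = if d = 0 then (Fintype.card F : ℂ) else 0 := by
  split_ifs with hd
  · simp [hd]
  · exact char_sum_zero hψ (LinearMap.toSpanSingleton F F d) ⟨1, by simpa [smul_eq_mul] using hd⟩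

lemma sum_V (hψ : ψ ≠ 1) {c : Fin 3 → F} (hc : c ≠ 0) :
    ∑ u : Fin 3 → F, ψ (u ⬝ᵥ c) = 0 := by
  obtain ⟨j, hj⟩ := Function.ne_iff.mp hc
  refine char_sum_zero hψ (dotL c) ⟨Pi.single j 1, ?_⟩
  have : dotL c (Pi.single j 1) = c j := by
    show Pi.single j 1 ⬝ᵥ c = c j
    rw [single_dotProduct, one_mul]
  rw [this]; exact hj


lemma pairL_apply (M C : Matrix (Fin 3) (Fin 3) F) : pairL M C = pairF C M := rfl

-- bridging
lemma sum_indicator_ker (c : Fin 3 → F) (f : (Fin 3 → F) → ℂ) :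
    (∑ u : Fin 3 → F, if u ⬝ᵥ c = 0 then f u else 0)
      = ∑ u : LinearMap.ker (dotL c), f u := by
  rw [← Finset.sum_filter]
  exact Finset.sum_subtype _ (fun x => by simp [LinearMap.mem_ker, dotL]) f

lemma sum_indicator_ker2 (c b : Fin 3 → F) (f : (Fin 3 → F) → ℂ) :
    (∑ u : Fin 3 → F, if u ⬝ᵥ c = 0 ∧ u ⬝ᵥ b = 0 then f u else 0)
      = ∑ u : (LinearMap.ker (dotL c) ⊓ LinearMap.ker (dotL b) : Submodule F _), f u := by
  rw [← Finset.sum_filter]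
  exact Finset.sum_subtype _
    (fun x => by simp [Submodule.mem_inf, LinearMap.mem_ker, dotL]) f

lemma finrank_ker_dotL {c : Fin 3 → F} (hc : c ≠ 0) :
    Module.finrank F (LinearMap.ker (dotL c)) = 2 := by
  have h3 : Module.finrank F (Fin 3 → F) = 3 := Module.finrank_fin_fun F
  have hr : Module.finrank F (LinearMap.range (dotL c)) = 1 := by
    obtain ⟨j, hj⟩ : ∃ j, c j ≠ 0 := by
      by_contra hcon; push_neg at hcon; exact hc (funext hcon)
    have hmem : c j ∈ LinearMap.range (dotL c) :=
      ⟨Pi.single j 1, by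
        show Pi.single j 1 ⬝ᵥ c = c j
        rw [single_dotProduct, one_mul]⟩
    have hne : LinearMap.range (dotL c) ≠ ⊥ := by
      intro hbot
      rw [hbot, Submodule.mem_bot] at hmem
      exact hj hmem
    have : Nontrivial (LinearMap.range (dotL c)) :=
      Submodule.nontrivial_iff_ne_bot.mpr hne
    have h1 : 0 < Module.finrank F (LinearMap.range (dotL c)) :=
      Module.finrank_pos_iff.mpr this
    have h2 : Module.finrank F (LinearMap.range (dotL c)) ≤ 1 := by
      simpa using (LinearMap.range (dotL c)).finrank_le
    omega
  have := LinearMap.finrank_range_add_finrank_ker (dotL c)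
  rw [hr, h3] at this
  omega

lemma finrank_ker2 {c b : Fin 3 → F} (hc : c ≠ 0)
    (hw : ∃ v, v ⬝ᵥ c = 0 ∧ v ⬝ᵥ b ≠ 0) :
    Module.finrank F
      ((LinearMap.ker (dotL c) ⊓ LinearMap.ker (dotL b) : Submodule F _)) = 1 := by
  obtain ⟨v, hv1, hv2⟩ := hw
  have hb : b ≠ 0 := by
    intro hb0; apply hv2; rw [hb0, dotProduct_zero]
  have hkc := finrank_ker_dotL hc
  have hkb := finrank_ker_dotL hb
  have h3 : Module.finrank F (Fin 3 → F) = 3 := Module.finrank_fin_fun F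
  set Wc := LinearMap.ker (dotL c)
  set Wb := LinearMap.ker (dotL b)
  have hnle : ¬ Wc ≤ Wb := by
    intro hle
    exact hv2 (hle (show v ∈ Wc from hv1))
  have hlt : Wc < Wc ⊔ Wb := by
    rcases lt_or_eq_of_le (le_sup_left : Wc ≤ Wc ⊔ Wb) with h | h
    · exact h
    · exfalso
      have hble : Wb ≤ Wc := by rw [h]; exact le_sup_right
      have : Wb = Wc := Submodule.eq_of_le_of_finrank_le hble (by omega)
      exact hnle (le_of_eq this.symm)
  have hsup : Module.finrank F (Wc ⊔ Wb : Submodule F _) = 3 := by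
    have hgt := Submodule.finrank_lt_finrank_of_lt hlt
    have hle3 := (Wc ⊔ Wb).finrank_le
    omega
  have := Submodule.finrank_sup_add_finrank_inf_eq Wc Wb
  rw [hkc, hkb] at this
  omega

lemma card_ker_subtype {c : Fin 3 → F} (hc : c ≠ 0) :
    Fintype.card (LinearMap.ker (dotL c)) = (Fintype.card F) ^ 2 := by
  rw [Module.card_eq_pow_finrank (K := F), finrank_ker_dotL hc]

lemma card_ker2_subtype {c b : Fin 3 → F} (hc : c ≠ 0)
    (hw : ∃ v, v ⬝ᵥ c = 0 ∧ v ⬝ᵥ b ≠ 0) :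
    Fintype.card ((LinearMap.ker (dotL c) ⊓ LinearMap.ker (dotL b) : Submodule F _))
      = Fintype.card F := by
  rw [Module.card_eq_pow_finrank (K := F), finrank_ker2 hc hw, pow_one]

/-- value of the H-sum -/
lemma sum_ker1 (hψ : ψ ≠ 1) {c : Fin 3 → F} (a : Fin 3 → F) (hc : c ≠ 0) :
    (∑ u : Fin 3 → F, if u ⬝ᵥ c = 0 then ψ (u ⬝ᵥ a) else 0)
      = if (∀ u, u ⬝ᵥ c = 0 → u ⬝ᵥ a = 0) then ((Fintype.card F : ℂ)) ^ 2 else 0 := by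
  rw [sum_indicator_ker]
  split_ifs with hall
  · have : ∀ u : LinearMap.ker (dotL c), ψ ((u : Fin 3 → F) ⬝ᵥ a) = 1 := by
      rintro ⟨u, hu⟩
      rw [hall u (by simpa [LinearMap.mem_ker, dotL] using hu), AddChar.map_zero_eq_one]
    rw [Finset.sum_congr rfl (fun u _ => this u), Finset.sum_const, Finset.card_univ,
      card_ker_subtype hc]
    simp [nsmul_eq_mul]
  · push_neg at hall
    obtain ⟨v, hv1, hv2⟩ := hall
    exact char_sum_zero hψ ((dotL a).comp (LinearMap.ker (dotL c)).subtype)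
      ⟨⟨v, by simpa [LinearMap.mem_ker, dotL] using hv1⟩, hv2⟩

/-- value of the K-sum -/
lemma sum_ker2 (hψ : ψ ≠ 1) {c b : Fin 3 → F} (a : Fin 3 → F) (hc : c ≠ 0)
    (hw : ∃ v, v ⬝ᵥ c = 0 ∧ v ⬝ᵥ b ≠ 0) :
    (∑ u : Fin 3 → F, if u ⬝ᵥ c = 0 ∧ u ⬝ᵥ b = 0 then ψ (u ⬝ᵥ a) else 0)
      = if (∀ u, u ⬝ᵥ c = 0 → u ⬝ᵥ b = 0 → u ⬝ᵥ a = 0) then (Fintype.card F : ℂ) else 0 := by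
  rw [sum_indicator_ker2]
  split_ifs with hall
  · have : ∀ u : (LinearMap.ker (dotL c) ⊓ LinearMap.ker (dotL b) : Submodule F _),
        ψ ((u : Fin 3 → F) ⬝ᵥ a) = 1 := by
      rintro ⟨u, hu⟩
      rw [Submodule.mem_inf] at hu
      rw [hall u (by simpa [LinearMap.mem_ker, dotL] using hu.1)
        (by simpa [LinearMap.mem_ker, dotL] using hu.2), AddChar.map_zero_eq_one]
    rw [Finset.sum_congr rfl (fun u _ => this u), Finset.sum_const, Finset.card_univ,
      card_ker2_subtype hc hw]
    simp [nsmul_eq_mul]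
  · push_neg at hall
    obtain ⟨v, hv1, hv2, hv3⟩ := hall
    exact char_sum_zero hψ
      ((dotL a).comp (LinearMap.ker (dotL c) ⊓ LinearMap.ker (dotL b) : Submodule F _).subtype)
      ⟨⟨v, Submodule.mem_inf.mpr ⟨LinearMap.mem_ker.mpr hv1, LinearMap.mem_ker.mpr hv2⟩⟩, hv3⟩

noncomputable def qif (x : F) : ℂ := if x = 0 then (Fintype.card F : ℂ) else 0

lemma sum_span_single_eval (hψ : ψ ≠ 1) (u c : Fin 3 → F) :
    ∑ t : F, ψ ((t • u) ⬝ᵥ c) = qif (u ⬝ᵥ c) := by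
  have : ∀ t : F, (t • u) ⬝ᵥ c = t * (u ⬝ᵥ c) := fun t => by
    rw [smul_dotProduct, smul_eq_mul]
  simp_rw [this]
  rw [sum_mulshift hψ]; rfl

lemma sum_span_pair_eval (hψ : ψ ≠ 1) (u v c : Fin 3 → F) :
    ∑ p : F × F, ψ ((p.1 • u + p.2 • v) ⬝ᵥ c) = qif (u ⬝ᵥ c) * qif (v ⬝ᵥ c) := by
  have : ∀ p : F × F, ψ ((p.1 • u + p.2 • v) ⬝ᵥ c)
      = ψ (p.1 * (u ⬝ᵥ c)) * ψ (p.2 * (v ⬝ᵥ c)) := fun p => by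
    rw [add_dotProduct, smul_dotProduct, smul_dotProduct, smul_eq_mul, smul_eq_mul,
      AddChar.map_add_eq_mul]
  simp_rw [this]
  rw [Fintype.sum_prod_type]
  dsimp only
  rw [← Finset.sum_mul_sum, sum_mulshift hψ, sum_mulshift hψ]; rfl

lemma li_pair_ne_zero {u v : Fin 3 → F} (h : LinearIndependent F ![u, v]) : u ≠ 0 := by
  have := h.ne_zero 0
  simpa using this

lemma li_pair_iff {u : Fin 3 → F} (hu : u ≠ 0) (v : Fin 3 → F) :
    LinearIndependent F ![u, v] ↔ ¬ ∃ t : F, t • u = v := by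
  rw [LinearIndependent.pair_iff' hu]
  push_neg
  rfl

lemma snoc3 {α : Type*} (u v w : α) : (![u, v, w] : Fin 3 → α) = Fin.snoc ![u, v] w := by
  funext i
  fin_cases i <;> rfl

lemma li_triple_iff {u v : Fin 3 → F} (hli : LinearIndependent F ![u, v]) (w : Fin 3 → F) :
    IsUnit (Matrix.of ![u, v, w]) ↔ ¬ ∃ p : F × F, p.1 • u + p.2 • v = w := by
  rw [← linearIndependent_rows_iff_isUnit]
  have : (Matrix.of ![u, v, w]).row = ![u, v, w] := rfl
  rw [this, snoc3, linearIndependent_fin_snoc, Matrix.range_cons_cons_empty]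
  constructor
  · rintro ⟨-, hw⟩ ⟨p, hp⟩
    exact hw (Submodule.mem_span_pair.mpr ⟨p.1, p.2, hp⟩)
  · intro hw
    refine ⟨hli, fun hmem => hw ?_⟩
    obtain ⟨a, b, hab⟩ := Submodule.mem_span_pair.mp hmem
    exact ⟨(a, b), hab⟩

lemma li_triple_pair {u v w : Fin 3 → F} (h : IsUnit (Matrix.of ![u, v, w])) :
    LinearIndependent F ![u, v] := by
  rw [← linearIndependent_rows_iff_isUnit] at h
  have h' : LinearIndependent F ![u, v, w] := h
  rw [snoc3, linearIndependent_fin_snoc] at h'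
  exact h'.1

lemma sum_ite_exists_image {α : Type*} [Fintype α] [DecidableEq α] {β : Type*} [Fintype β]
    (φ : β → α) (hinj : Function.Injective φ) (g : α → ℂ) :
    ∑ a : α, (if ∃ b, φ b = a then g a else 0) = ∑ b : β, g (φ b) := by
  rw [← Finset.sum_filter]
  have : Finset.univ.filter (fun a => ∃ b, φ b = a) = Finset.univ.image φ := by
    ext a; simp
  rw [this, Finset.sum_image (fun b _ b' _ h => hinj h)]

lemma sum_li_pair {u : Fin 3 → F} (hu : u ≠ 0) (g : (Fin 3 → F) → ℂ) :
    ∑ v : Fin 3 → F, (if LinearIndependent F ![u, v] then g v else 0)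
      = (∑ v : Fin 3 → F, g v) - ∑ t : F, g (t • u) := by
  have h1 : ∀ v, (if LinearIndependent F ![u, v] then g v else 0)
      = g v - (if ∃ t : F, t • u = v then g v else 0) := fun v => by
    by_cases h : ∃ t : F, t • u = v
    · rw [if_pos h, if_neg (fun hu' => ((li_pair_iff hu v).mp hu') h), sub_self]
    · rw [if_pos ((li_pair_iff hu v).mpr h), if_neg h, sub_zero]
  simp_rw [h1]
  rw [Finset.sum_sub_distrib, sum_ite_exists_image _ (smul_left_injective F hu) g]

lemma sum_li_triple {u v : Fin 3 → F} (hli : LinearIndependent F ![u, v])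
    (g : (Fin 3 → F) → ℂ) :
    ∑ w : Fin 3 → F, (if IsUnit (Matrix.of ![u, v, w]) then g w else 0)
      = (∑ w : Fin 3 → F, g w) - ∑ p : F × F, g (p.1 • u + p.2 • v) := by
  have h1 : ∀ w, (if IsUnit (Matrix.of ![u, v, w]) then g w else 0)
      = g w - (if ∃ p : F × F, p.1 • u + p.2 • v = w then g w else 0) := fun w => by
    by_cases h : ∃ p : F × F, p.1 • u + p.2 • v = w
    · rw [if_pos h, if_neg (fun hu => ((li_triple_iff hli w).mp hu) h), sub_self]
    · rw [if_pos ((li_triple_iff hli w).mpr h), if_neg h, sub_zero]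
  simp_rw [h1]
  rw [Finset.sum_sub_distrib]
  congr 1
  refine sum_ite_exists_image (fun p : F × F => p.1 • u + p.2 • v) ?_ g
  intro p p' hp
  have hp' : p.1 • u + p.2 • v = p'.1 • u + p'.2 • v := hp
  have h0 : (p.1 - p'.1) • u + (p.2 - p'.2) • v = 0 := by
    rw [sub_smul, sub_smul]
    rw [show p.1 • u - p'.1 • u + (p.2 • v - p'.2 • v)
      = (p.1 • u + p.2 • v) - (p'.1 • u + p'.2 • v) by abel, hp', sub_self]
  obtain ⟨h2, h3⟩ := LinearIndependent.pair_iff.mp hli _ _ h0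
  have := sub_eq_zero.mp h2
  have := sub_eq_zero.mp h3
  exact Prod.ext ‹p.1 = p'.1› ‹p.2 = p'.2›

lemma sum_li_triple_dep {u v : Fin 3 → F} (h : ¬ LinearIndependent F ![u, v])
    (g : (Fin 3 → F) → ℂ) :
    ∑ w : Fin 3 → F, (if IsUnit (Matrix.of ![u, v, w]) then g w else 0) = 0 := by
  refine Finset.sum_eq_zero fun w _ => ?_
  rw [if_neg (fun hu => h (li_triple_pair hu))]

noncomputable def lam (ψ : AddChar F ℂ) (C : Matrix (Fin 3) (Fin 3) F) : ℂ :=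
  ∑ G : Matrix (Fin 3) (Fin 3) F, if IsUnit G then ψ (pairF C G) else 0

def rowsEquiv : ((Fin 3 → F) × (Fin 3 → F) × (Fin 3 → F)) ≃ Matrix (Fin 3) (Fin 3) F where
  toFun t := Matrix.of ![t.1, t.2.1, t.2.2]
  invFun G := (G 0, G 1, G 2)
  left_inv t := rfl
  right_inv G := by
    funext i
    fin_cases i <;> rfl

lemma lam_rows (ψ : AddChar F ℂ) (C : Matrix (Fin 3) (Fin 3) F) :
    lam ψ C = ∑ u : Fin 3 → F, ∑ v : Fin 3 → F, ∑ w : Fin 3 → F,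
      (if IsUnit (Matrix.of ![u, v, w])
        then ψ (u ⬝ᵥ C 0) * ψ (v ⬝ᵥ C 1) * ψ (w ⬝ᵥ C 2) else 0) := by
  unfold lam
  rw [← Equiv.sum_comp (rowsEquiv (F := F))
    (fun G => if IsUnit G then ψ (pairF C G) else 0)]
  rw [Fintype.sum_prod_type]
  refine Finset.sum_congr rfl fun u _ => ?_
  rw [Fintype.sum_prod_type]
  refine Finset.sum_congr rfl fun v _ => ?_
  refine Finset.sum_congr rfl fun w _ => ?_
  have hp : pairF C (Matrix.of ![u, v, w]) = u ⬝ᵥ C 0 + (v ⬝ᵥ C 1 + w ⬝ᵥ C 2) := by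
    unfold pairF
    rw [Fin.sum_univ_three]
    show C 0 ⬝ᵥ u + C 1 ⬝ᵥ v + C 2 ⬝ᵥ w = _
    rw [dotProduct_comm, dotProduct_comm (C 1), dotProduct_comm (C 2)]
    ring
  show (if IsUnit (Matrix.of ![u, v, w]) then ψ (pairF C (Matrix.of ![u, v, w])) else 0) = _
  rw [hp, AddChar.map_add_eq_mul, AddChar.map_add_eq_mul, mul_assoc]

lemma sum_ite_and_ne (P : (Fin 3 → F) → Prop) [DecidablePred fun u => P u ∧ u ≠ 0]
    [DecidablePred P] (hP0 : P 0) (f : (Fin 3 → F) → ℂ) :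
    ∑ u : Fin 3 → F, (if P u ∧ u ≠ 0 then f u else 0)
      = (∑ u : Fin 3 → F, if P u then f u else 0) - f 0 := by
  rw [← Finset.add_sum_erase _ (fun u => if P u ∧ u ≠ 0 then f u else 0) (Finset.mem_univ 0),
    ← Finset.add_sum_erase _ (fun u => if P u then f u else 0) (Finset.mem_univ 0)]
  rw [if_neg (by simp), if_pos hP0, zero_add]
  have h1 : ∑ u ∈ Finset.univ.erase 0, (if P u ∧ u ≠ 0 then f u else 0)
      = ∑ u ∈ Finset.univ.erase 0, (if P u then f u else 0) :=
    Finset.sum_congr rfl fun u hu => by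
      have hne : u ≠ 0 := Finset.ne_of_mem_erase hu
      by_cases hp : P u <;> simp [hp, hne]
  rw [h1]; ring

/-- the main form of `lam` when the last row of `C` is nonzero -/
lemma lam_main_form (hψ : ψ ≠ 1) {C : Matrix (Fin 3) (Fin 3) F} (hc : C 2 ≠ 0) :
    lam ψ C = ∑ u : Fin 3 → F,
      (if u ⬝ᵥ C 2 = 0 ∧ u ≠ 0 then
        -((Fintype.card F : ℂ))^2 * ψ (u ⬝ᵥ C 0) *
          ((∑ v : Fin 3 → F, if v ⬝ᵥ C 2 = 0 then ψ (v ⬝ᵥ C 1) else 0) - qif (u ⬝ᵥ C 1))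
      else 0) := by
  classical
  set q : ℂ := (Fintype.card F : ℂ) with hq
  set SH : ℂ := ∑ v : Fin 3 → F, if v ⬝ᵥ C 2 = 0 then ψ (v ⬝ᵥ C 1) else 0 with hSH
  rw [lam_rows]
  refine Finset.sum_congr rfl fun u _ => ?_
  -- step 1: evaluate the w-sums
  have step1 : ∀ v : Fin 3 → F,
      (∑ w : Fin 3 → F, if IsUnit (Matrix.of ![u, v, w])
          then ψ (u ⬝ᵥ C 0) * ψ (v ⬝ᵥ C 1) * ψ (w ⬝ᵥ C 2) else 0)
        = (if LinearIndependent F ![u, v] then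
            -(ψ (u ⬝ᵥ C 0) * qif (u ⬝ᵥ C 2)) * (ψ (v ⬝ᵥ C 1) * qif (v ⬝ᵥ C 2)) else 0) := by
    intro v
    by_cases hli : LinearIndependent F ![u, v]
    · rw [if_pos hli]
      rw [sum_li_triple hli (fun w => ψ (u ⬝ᵥ C 0) * ψ (v ⬝ᵥ C 1) * ψ (w ⬝ᵥ C 2))]
      rw [show (∑ w : Fin 3 → F, ψ (u ⬝ᵥ C 0) * ψ (v ⬝ᵥ C 1) * ψ (w ⬝ᵥ C 2))
          = ψ (u ⬝ᵥ C 0) * ψ (v ⬝ᵥ C 1) * ∑ w : Fin 3 → F, ψ (w ⬝ᵥ C 2) from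
        (Finset.mul_sum _ _ _).symm]
      rw [show (∑ p : F × F, ψ (u ⬝ᵥ C 0) * ψ (v ⬝ᵥ C 1) * ψ ((p.1 • u + p.2 • v) ⬝ᵥ C 2))
          = ψ (u ⬝ᵥ C 0) * ψ (v ⬝ᵥ C 1) * ∑ p : F × F, ψ ((p.1 • u + p.2 • v) ⬝ᵥ C 2) from
        (Finset.mul_sum _ _ _).symm]
      rw [sum_V hψ hc, sum_span_pair_eval hψ]
      ring
    · rw [if_neg hli]
      exact sum_li_triple_dep hli _
  rw [Finset.sum_congr rfl fun v _ => step1 v]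
  -- step 2: evaluate the v-sum
  by_cases hu0 : u = 0
  · subst hu0
    rw [Finset.sum_eq_zero fun v _ => if_neg (fun h => (li_pair_ne_zero h) rfl)]
    rw [if_neg (by tauto)]
  · -- u ≠ 0
    have hpull : ∀ v : Fin 3 → F,
        (if LinearIndependent F ![u, v] then
          -(ψ (u ⬝ᵥ C 0) * qif (u ⬝ᵥ C 2)) * (ψ (v ⬝ᵥ C 1) * qif (v ⬝ᵥ C 2)) else 0)
        = -(ψ (u ⬝ᵥ C 0) * qif (u ⬝ᵥ C 2)) *
            (if LinearIndependent F ![u, v] then ψ (v ⬝ᵥ C 1) * qif (v ⬝ᵥ C 2) else 0) := by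
      intro v
      by_cases h : LinearIndependent F ![u, v] <;> simp [h]
    rw [Finset.sum_congr rfl fun v _ => hpull v, ← Finset.mul_sum]
    rw [sum_li_pair hu0 (fun v => ψ (v ⬝ᵥ C 1) * qif (v ⬝ᵥ C 2))]
    by_cases huc : u ⬝ᵥ C 2 = 0
    · -- main case
      have hqif : qif (u ⬝ᵥ C 2) = q := by rw [qif, if_pos huc]
      have hA : (∑ v : Fin 3 → F, ψ (v ⬝ᵥ C 1) * qif (v ⬝ᵥ C 2)) = q * SH := by
        rw [hSH, Finset.mul_sum]
        refine Finset.sum_congr rfl fun v _ => ?_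
        rw [qif]
        by_cases hv : v ⬝ᵥ C 2 = 0 <;> simp [hv] <;> ring
      have hB : (∑ t : F, ψ ((t • u) ⬝ᵥ C 1) * qif ((t • u) ⬝ᵥ C 2)) = q * qif (u ⬝ᵥ C 1) := by
        have : ∀ t : F, ψ ((t • u) ⬝ᵥ C 1) * qif ((t • u) ⬝ᵥ C 2) = ψ (t * (u ⬝ᵥ C 1)) * q := by
          intro t
          rw [smul_dotProduct, smul_dotProduct, smul_eq_mul, smul_eq_mul, huc, mul_zero, qif,
            if_pos rfl]
        rw [Finset.sum_congr rfl fun t _ => this t, ← Finset.sum_mul, sum_mulshift hψ]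
        rw [qif, mul_comm]
      rw [hA, hB, hqif, if_pos ⟨huc, hu0⟩]
      ring
    · rw [if_neg (by tauto)]
      rw [show qif (u ⬝ᵥ C 2) = 0 from if_neg huc]
      ring

lemma lam_bound_row2 (hψ : ψ ≠ 1) {C : Matrix (Fin 3) (Fin 3) F} (hc : C 2 ≠ 0) :
    norm (lam ψ C) ≤ (Fintype.card F : ℝ)^3 * ((Fintype.card F : ℝ) - 1) *
      ((Fintype.card F : ℝ)^2 - 1) := by
  have hq2 : (2 : ℕ) ≤ Fintype.card F := Fintype.one_lt_card
  have hq2R : (2 : ℝ) ≤ (Fintype.card F : ℝ) := by exact_mod_cast hq2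
  have hQ0 : (0:ℝ) ≤ (Fintype.card F : ℝ) := by linarith
  have h2a : (0:ℝ) ≤ (Fintype.card F : ℝ)^2 - (Fintype.card F : ℝ) := by nlinarith
  have h2b : (0:ℝ) ≤ (Fintype.card F : ℝ)^2 - 1 := by nlinarith
  have h2c : (0:ℝ) ≤ (Fintype.card F : ℝ) - 1 := by linarith
  have h2d : (0:ℝ) ≤ (Fintype.card F : ℝ)^2 - 2 := by nlinarith
  have hkey1 : (0:ℝ) ≤ (Fintype.card F : ℝ)^2 * ((Fintype.card F : ℝ)^2 - (Fintype.card F : ℝ))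
      * ((Fintype.card F : ℝ)^2 - 1) :=
    mul_nonneg (mul_nonneg (sq_nonneg _) h2a) h2b
  have hkey2 : (0:ℝ) ≤ (Fintype.card F : ℝ)^3 * ((Fintype.card F : ℝ) - 1)
      * ((Fintype.card F : ℝ)^2 - 2) :=
    mul_nonneg (mul_nonneg (pow_nonneg hQ0 3) h2c) h2d
  have hkey3 : (0:ℝ) ≤ (Fintype.card F : ℝ)^2 * ((Fintype.card F : ℝ)^2 - (Fintype.card F : ℝ)) :=
    mul_nonneg (sq_nonneg _) h2a
  have hkey4 : (1:ℝ) ≤ ((Fintype.card F : ℝ) - 1) * ((Fintype.card F : ℝ)^2 - 1) := by nlinarith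
  have hkey5 : (0:ℝ) ≤ (Fintype.card F : ℝ)^3 *
      (((Fintype.card F : ℝ) - 1) * ((Fintype.card F : ℝ)^2 - 1) - 1) :=
    mul_nonneg (pow_nonneg hQ0 3) (by linarith)
  rw [lam_main_form hψ hc, sum_ker1 hψ (C 1) hc]
  by_cases hball : ∀ u, u ⬝ᵥ C 2 = 0 → u ⬝ᵥ C 1 = 0
  · -- CASE A
    rw [if_pos hball]
    have hstep : ∀ u : Fin 3 → F,
        (if u ⬝ᵥ C 2 = 0 ∧ u ≠ 0 then
          -((Fintype.card F : ℂ))^2 * ψ (u ⬝ᵥ C 0) *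
            (((Fintype.card F : ℂ))^2 - qif (u ⬝ᵥ C 1)) else 0)
        = (if u ⬝ᵥ C 2 = 0 ∧ u ≠ 0 then
            (-((Fintype.card F : ℂ))^2 * (((Fintype.card F : ℂ))^2 - (Fintype.card F : ℂ)))
              * ψ (u ⬝ᵥ C 0) else 0) := fun u => by
      by_cases h : u ⬝ᵥ C 2 = 0 ∧ u ≠ 0
      · rw [if_pos h, if_pos h, qif, if_pos (hball u h.1)]; ring
      · rw [if_neg h, if_neg h]
    rw [Finset.sum_congr rfl fun u _ => hstep u,
      sum_ite_and_ne (fun u => u ⬝ᵥ C 2 = 0) (zero_dotProduct _)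
        (fun u => (-((Fintype.card F : ℂ))^2 * (((Fintype.card F : ℂ))^2 - (Fintype.card F : ℂ)))
          * ψ (u ⬝ᵥ C 0))]
    have hpull : ∀ u : Fin 3 → F,
        (if u ⬝ᵥ C 2 = 0 then
          (-((Fintype.card F : ℂ))^2 * (((Fintype.card F : ℂ))^2 - (Fintype.card F : ℂ)))
            * ψ (u ⬝ᵥ C 0) else 0)
        = (-((Fintype.card F : ℂ))^2 * (((Fintype.card F : ℂ))^2 - (Fintype.card F : ℂ)))
            * (if u ⬝ᵥ C 2 = 0 then ψ (u ⬝ᵥ C 0) else 0) := fun u => by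
      by_cases h : u ⬝ᵥ C 2 = 0 <;> simp [h]
    rw [Finset.sum_congr rfl fun u _ => hpull u, ← Finset.mul_sum, sum_ker1 hψ (C 0) hc,
      zero_dotProduct, AddChar.map_zero_eq_one, mul_one]
    by_cases hall0 : ∀ u, u ⬝ᵥ C 2 = 0 → u ⬝ᵥ C 0 = 0
    · rw [if_pos hall0]
      have hval : (-((Fintype.card F : ℂ))^2 * (((Fintype.card F : ℂ))^2 - (Fintype.card F : ℂ)))
            * ((Fintype.card F : ℂ))^2
          - (-((Fintype.card F : ℂ))^2 * (((Fintype.card F : ℂ))^2 - (Fintype.card F : ℂ)))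
        = ((-((Fintype.card F : ℝ)^2 * ((Fintype.card F : ℝ)^2 - (Fintype.card F : ℝ))
            * ((Fintype.card F : ℝ)^2 - 1)) : ℝ) : ℂ) := by
        push_cast; ring
      rw [hval, Complex.norm_real, Real.norm_eq_abs, abs_of_nonpos (by linarith)]
      nlinarith [hkey1, hkey2]
    · rw [if_neg hall0]
      have hval : (-((Fintype.card F : ℂ))^2 * (((Fintype.card F : ℂ))^2 - (Fintype.card F : ℂ)))
            * 0
          - (-((Fintype.card F : ℂ))^2 * (((Fintype.card F : ℂ))^2 - (Fintype.card F : ℂ)))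
        = ((((Fintype.card F : ℝ)^2 * ((Fintype.card F : ℝ)^2 - (Fintype.card F : ℝ))) : ℝ) : ℂ) := by
        push_cast; ring
      rw [hval, Complex.norm_real, Real.norm_eq_abs, abs_of_nonneg (by linarith)]
      nlinarith [hkey2, hkey3]
  · -- CASE B
    rw [if_neg hball]
    push_neg at hball
    have hstep : ∀ u : Fin 3 → F,
        (if u ⬝ᵥ C 2 = 0 ∧ u ≠ 0 then
          -((Fintype.card F : ℂ))^2 * ψ (u ⬝ᵥ C 0) * (0 - qif (u ⬝ᵥ C 1)) else 0)
        = (if (u ⬝ᵥ C 2 = 0 ∧ u ⬝ᵥ C 1 = 0) ∧ u ≠ 0 then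
            ((Fintype.card F : ℂ))^3 * ψ (u ⬝ᵥ C 0) else 0) := fun u => by
      by_cases h : u ⬝ᵥ C 2 = 0 ∧ u ≠ 0
      · rw [if_pos h]
        by_cases h1 : u ⬝ᵥ C 1 = 0
        · rw [if_pos ⟨⟨h.1, h1⟩, h.2⟩, qif, if_pos h1]; ring
        · rw [if_neg (fun hcon => h1 hcon.1.2), qif, if_neg h1]; ring
      · rw [if_neg h, if_neg (fun hcon => h ⟨hcon.1.1, hcon.2⟩)]
    rw [Finset.sum_congr rfl fun u _ => hstep u,
      sum_ite_and_ne (fun u => u ⬝ᵥ C 2 = 0 ∧ u ⬝ᵥ C 1 = 0)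
        ⟨zero_dotProduct _, zero_dotProduct _⟩
        (fun u => ((Fintype.card F : ℂ))^3 * ψ (u ⬝ᵥ C 0))]
    have hpull : ∀ u : Fin 3 → F,
        (if u ⬝ᵥ C 2 = 0 ∧ u ⬝ᵥ C 1 = 0 then ((Fintype.card F : ℂ))^3 * ψ (u ⬝ᵥ C 0) else 0)
        = ((Fintype.card F : ℂ))^3 * (if u ⬝ᵥ C 2 = 0 ∧ u ⬝ᵥ C 1 = 0 then ψ (u ⬝ᵥ C 0) else 0) :=
      fun u => by by_cases h : u ⬝ᵥ C 2 = 0 ∧ u ⬝ᵥ C 1 = 0 <;> simp [h]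
    rw [Finset.sum_congr rfl fun u _ => hpull u, ← Finset.mul_sum,
      sum_ker2 hψ (C 0) hc hball, zero_dotProduct, AddChar.map_zero_eq_one, mul_one]
    by_cases hall0 : ∀ u, u ⬝ᵥ C 2 = 0 → u ⬝ᵥ C 1 = 0 → u ⬝ᵥ C 0 = 0
    · rw [if_pos hall0]
      have hval : ((Fintype.card F : ℂ))^3 * (Fintype.card F : ℂ) - ((Fintype.card F : ℂ))^3
          = ((((Fintype.card F : ℝ)^3 * ((Fintype.card F : ℝ) - 1)) : ℝ) : ℂ) := by
        push_cast; ring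
      rw [hval, Complex.norm_real, Real.norm_eq_abs, abs_of_nonneg (by nlinarith)]
      nlinarith [hkey2]
    · rw [if_neg hall0]
      have hval : ((Fintype.card F : ℂ))^3 * 0 - ((Fintype.card F : ℂ))^3
          = (((-(Fintype.card F : ℝ)^3) : ℝ) : ℂ) := by push_cast; ring
      rw [hval, Complex.norm_real, Real.norm_eq_abs, abs_of_nonpos (by nlinarith)]
      nlinarith [hkey5]

lemma isUnit_submatrix_perm (σ : Equiv.Perm (Fin 3)) (G : Matrix (Fin 3) (Fin 3) F) :
    IsUnit (G.submatrix σ id) ↔ IsUnit G := by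
  rw [Matrix.isUnit_iff_isUnit_det, Matrix.isUnit_iff_isUnit_det, Matrix.det_permute,
    isUnit_iff_ne_zero, isUnit_iff_ne_zero]
  have hs : ((Equiv.Perm.sign σ : ℤ) : F) ≠ 0 := by
    rcases Int.units_eq_one_or (Equiv.Perm.sign σ) with h | h <;> rw [h] <;> simp
  constructor
  · intro h hd; exact h (by rw [hd, mul_zero])
  · exact fun h => mul_ne_zero hs h

def permEquiv (σ : Equiv.Perm (Fin 3)) :
    Matrix (Fin 3) (Fin 3) F ≃ Matrix (Fin 3) (Fin 3) F where
  toFun G := G.submatrix σ id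
  invFun G := G.submatrix σ.symm id
  left_inv G := by
    funext i j
    simp [Matrix.submatrix_apply]
  right_inv G := by
    funext i j
    simp [Matrix.submatrix_apply]

lemma lam_perm (ψ : AddChar F ℂ) (σ : Equiv.Perm (Fin 3)) (C : Matrix (Fin 3) (Fin 3) F) :
    lam ψ (C.submatrix σ id) = lam ψ C := by
  unfold lam
  rw [← Equiv.sum_comp (permEquiv (F := F) σ.symm)
    (fun G => if IsUnit G then ψ (pairF C G) else 0)]
  refine Finset.sum_congr rfl fun G _ => ?_
  have h1 : pairF (C.submatrix σ id) G = pairF C (G.submatrix σ.symm id) := by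
    unfold pairF
    rw [← Equiv.sum_comp σ (fun i => C i ⬝ᵥ (G.submatrix σ.symm id) i)]
    refine Finset.sum_congr rfl fun k _ => ?_
    show (C.submatrix σ id) k ⬝ᵥ G k = C (σ k) ⬝ᵥ (G.submatrix σ.symm id) (σ k)
    have h2 : (G.submatrix σ.symm id) (σ k) = G k := by
      funext j
      rw [Matrix.submatrix_apply, Equiv.symm_apply_apply, id]
    rw [h2]
    rfl
  show (if IsUnit G then ψ (pairF (C.submatrix σ id) G) else 0)
    = (if IsUnit (G.submatrix σ.symm id) then ψ (pairF C (G.submatrix σ.symm id)) else 0)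
  rw [h1]
  by_cases h : IsUnit G
  · rw [if_pos h, if_pos ((isUnit_submatrix_perm σ.symm G).mpr h)]
  · rw [if_neg h, if_neg (fun hc => h ((isUnit_submatrix_perm σ.symm G).mp hc))]

lemma lam_bound (hψ : ψ ≠ 1) {C : Matrix (Fin 3) (Fin 3) F} (hC : C ≠ 0) :
    norm (lam ψ C) ≤ (Fintype.card F : ℝ)^3 * ((Fintype.card F : ℝ) - 1) *
      ((Fintype.card F : ℝ)^2 - 1) := by
  obtain ⟨i, hi⟩ : ∃ i, C i ≠ 0 := by
    by_contra h
    push_neg at h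
    exact hC (funext h)
  have h2 : (C.submatrix (Equiv.swap (2 : Fin 3) i) id) 2 = C i := by
    funext j
    simp [Matrix.submatrix_apply, Equiv.swap_apply_left]
  rw [← lam_perm ψ (Equiv.swap (2 : Fin 3) i) C]
  exact lam_bound_row2 hψ (h2 ▸ hi)

lemma sum_psi_pair (hψ : ψ ≠ 1) {M : Matrix (Fin 3) (Fin 3) F} (hM : M ≠ 0) :
    ∑ C : Matrix (Fin 3) (Fin 3) F, ψ (pairF C M) = 0 := by
  have h := char_sum_zero hψ (pairL M) ?_
  · rw [← h]
    exact Finset.sum_congr rfl fun C _ => by rw [pairL_apply]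
  · obtain ⟨i, hi⟩ : ∃ i, M i ≠ 0 := by
      by_contra h; push_neg at h; exact hM (funext h)
    obtain ⟨j, hj⟩ : ∃ j, M i j ≠ 0 := by
      by_contra h; push_neg at h; exact hi (funext h)
    refine ⟨(fun k => if k = i then Pi.single j 1 else 0), ?_⟩
    show pairF ((fun k => if k = i then Pi.single j 1 else 0) : Matrix (Fin 3) (Fin 3) F) M ≠ 0
    unfold pairF
    rw [Finset.sum_eq_single i] <;> dsimp only
    · rw [if_pos rfl, single_dotProduct, one_mul]
      exact hj
    · intro k _ hk
      rw [if_neg hk, zero_dotProduct]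
    · intro hmem; exact absurd (Finset.mem_univ i) hmem

lemma card_mat : Fintype.card (Matrix (Fin 3) (Fin 3) F) = Fintype.card F ^ 9 := by
  have h1 : Fintype.card (Matrix (Fin 3) (Fin 3) F) = Fintype.card (Fin 3 → Fin 3 → F) :=
    Fintype.card_congr (Equiv.refl _)
  rw [h1, Fintype.card_fun, Fintype.card_fun, Fintype.card_fin, ← pow_mul]

lemma sum_psi_pair_zero :
    ∑ C : Matrix (Fin 3) (Fin 3) F, ψ (pairF C (0 : Matrix (Fin 3) (Fin 3) F))
      = (Fintype.card F : ℂ) ^ 9 := by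
  have h1 : ∀ C : Matrix (Fin 3) (Fin 3) F, pairF C (0 : Matrix (Fin 3) (Fin 3) F) = 0 := by
    intro C; unfold pairF
    refine Finset.sum_eq_zero fun i _ => ?_
    rw [show (0 : Matrix (Fin 3) (Fin 3) F) i = 0 from rfl, dotProduct_zero]
  rw [Finset.sum_congr rfl fun C _ => by rw [h1 C, AddChar.map_zero_eq_one]]
  rw [Finset.sum_const, Finset.card_univ, card_mat]
  simp

lemma psi_conj (ψ : AddChar F ℂ) (t : F) : (starRingEnd ℂ) (ψ t) = ψ (-t) := by
  have hpow : (ψ t) ^ (Fintype.card F) = 1 := by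
    rw [← AddChar.map_nsmul_eq_pow, card_nsmul_eq_zero, AddChar.map_zero_eq_one]
  have hn : ‖ψ t‖ = 1 := Complex.norm_eq_one_of_pow_eq_one hpow Fintype.card_ne_zero
  rw [← Complex.inv_eq_conj hn, ← AddChar.map_neg_eq_inv]

noncomputable def unitsEquiv {M : Type*} [Monoid M] : {x : M // IsUnit x} ≃ Mˣ where
  toFun x := x.2.unit
  invFun u := ⟨u, u.isUnit⟩
  left_inv x := Subtype.ext x.2.unit_spec
  right_inv u := Units.ext u.isUnit.unit_spec

lemma card_units_filter :
    (Finset.univ.filter (fun G : Matrix (Fin 3) (Fin 3) F => IsUnit G)).card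
      = (Fintype.card F ^ 3 - 1) * (Fintype.card F ^ 3 - Fintype.card F)
        * (Fintype.card F ^ 3 - Fintype.card F ^ 2) := by
  have h1 : (Finset.univ.filter (fun G : Matrix (Fin 3) (Fin 3) F => IsUnit G)).card
      = Fintype.card {G : Matrix (Fin 3) (Fin 3) F // IsUnit G} :=
    (Fintype.card_subtype _).symm
  rw [h1, Fintype.card_congr (unitsEquiv (M := Matrix (Fin 3) (Fin 3) F)),
    ← Nat.card_eq_fintype_card]
  have h2 := Matrix.card_GL_field (𝔽 := F) 3
  rw [show (GL (Fin 3) F) = (Matrix (Fin 3) (Fin 3) F)ˣ from rfl] at h2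
  rw [h2, Fin.prod_univ_three]
  norm_num

lemma pair_zero (M : Matrix (Fin 3) (Fin 3) F) : pairF 0 M = 0 := by
  unfold pairF
  refine Finset.sum_eq_zero fun i _ => ?_
  rw [show (0 : Matrix (Fin 3) (Fin 3) F) i = 0 from rfl, zero_dotProduct]

lemma pair_sub (C A B : Matrix (Fin 3) (Fin 3) F) :
    pairF C (A - B) = pairF C A - pairF C B := by
  unfold pairF
  rw [← Finset.sum_sub_distrib]
  refine Finset.sum_congr rfl fun i _ => ?_
  rw [show (A - B) i = A i - B i from rfl, dotProduct_sub]

lemma pair_neg_left (C G : Matrix (Fin 3) (Fin 3) F) : pairF (-C) G = - pairF C G := by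
  unfold pairF
  rw [← Finset.sum_neg_distrib]
  refine Finset.sum_congr rfl fun i _ => ?_
  rw [show (-C) i = -(C i) from rfl, neg_dotProduct]

lemma parseval (hψ : ψ ≠ 1) (Z : Finset (Matrix (Fin 3) (Fin 3) F)) :
    ∑ C : Matrix (Fin 3) (Fin 3) F, (norm (∑ A ∈ Z, ψ (- pairF C A)))^2
      = (Fintype.card F : ℝ)^9 * Z.card := by
  have hC : (((∑ C : Matrix (Fin 3) (Fin 3) F,
      (norm (∑ A ∈ Z, ψ (- pairF C A)))^2 : ℝ)) : ℂ)
      = ∑ C : Matrix (Fin 3) (Fin 3) F,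
        (∑ A ∈ Z, ψ (- pairF C A)) * (starRingEnd ℂ) (∑ A ∈ Z, ψ (- pairF C A)) := by
    push_cast
    refine Finset.sum_congr rfl fun C _ => ?_
    rw [Complex.mul_conj, ← Complex.sq_norm]
    norm_cast
  have hexp : ∀ C : Matrix (Fin 3) (Fin 3) F,
      (∑ A ∈ Z, ψ (- pairF C A)) * (starRingEnd ℂ) (∑ A ∈ Z, ψ (- pairF C A))
        = ∑ A ∈ Z, ∑ A' ∈ Z, ψ (pairF C (A' - A)) := by
    intro C
    rw [map_sum]
    rw [Finset.sum_mul_sum]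
    refine Finset.sum_congr rfl fun A _ => Finset.sum_congr rfl fun A' _ => ?_
    rw [psi_conj ψ (- pairF C A'), neg_neg, pair_sub, sub_eq_add_neg,
      AddChar.map_add_eq_mul, mul_comm]
  have hsum : ∑ C : Matrix (Fin 3) (Fin 3) F, ∑ A ∈ Z, ∑ A' ∈ Z, ψ (pairF C (A' - A))
      = ((Fintype.card F : ℂ))^9 * Z.card := by
    rw [Finset.sum_comm]
    have inner : ∀ A ∈ Z, (∑ C : Matrix (Fin 3) (Fin 3) F, ∑ A' ∈ Z, ψ (pairF C (A' - A)))
        = ((Fintype.card F : ℂ))^9 := by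
      intro A hA
      rw [Finset.sum_comm]
      have hterm : ∀ A' ∈ Z, (∑ C : Matrix (Fin 3) (Fin 3) F, ψ (pairF C (A' - A)))
          = if A' = A then ((Fintype.card F : ℂ))^9 else 0 := by
        intro A' _
        by_cases hAA : A' = A
        · rw [if_pos hAA, hAA, sub_self, sum_psi_pair_zero]
        · rw [if_neg hAA]
          exact sum_psi_pair hψ (sub_ne_zero.mpr hAA)
      rw [Finset.sum_congr rfl hterm, Finset.sum_ite_eq' Z A, if_pos hA]
    rw [Finset.sum_congr rfl inner, Finset.sum_const, nsmul_eq_mul, mul_comm]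
  have := hC.trans ((Finset.sum_congr rfl fun C _ => hexp C).trans hsum)
  have hcast : (((Fintype.card F : ℝ)^9 * (Z.card : ℝ) : ℝ) : ℂ)
      = ((Fintype.card F : ℂ))^9 * (Z.card : ℂ) := by push_cast; ring
  exact Complex.ofReal_injective (this.trans hcast.symm)

end SpectralGapAux

open SpectralGapAux Matrix Finset in
/-- If `X, Y ⊆ Mat₃(F_q)` satisfy `√(|X|·|Y|) > q^6 + q^3 + 2`, then there exist `A ∈ X`
and `B ∈ Y` with `B - A` invertible. -/
theorem spectral_gap_two_sets (q : ℕ) (F : Type*) [Field F] [Fintype F] [DecidableEq F]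
    (hq : Fintype.card F = q)
    (X Y : Finset (Matrix (Fin 3) (Fin 3) F))
    (h : Real.sqrt ((X.card : ℝ) * (Y.card : ℝ)) > (q : ℝ) ^ 6 + (q : ℝ) ^ 3 + 2) :
    ∃ A ∈ X, ∃ B ∈ Y, IsUnit (B - A) := by
  classical
  subst hq
  by_contra hcon
  push_neg at hcon
  -- the character
  set ψ : AddChar F ℂ := AddChar.FiniteField.primitiveChar_to_Complex F with hψdef
  have hψ : ψ ≠ 1 := by
    intro h1
    have hp := AddChar.FiniteField.primitiveChar_to_Complex_isPrimitive F
    have h2 := hp (one_ne_zero (α := F))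
    rw [AddChar.mulShift_one] at h2
    exact h2 h1
  -- abbreviations
  set Q : ℝ := (Fintype.card F : ℝ) with hQdef
  have hq2 : (2 : ℕ) ≤ Fintype.card F := Fintype.one_lt_card
  have hq2R : (2 : ℝ) ≤ Q := by rw [hQdef]; exact_mod_cast hq2
  have hQ0 : (0 : ℝ) < Q := by linarith
  set xf : Matrix (Fin 3) (Fin 3) F → ℂ := fun C => ∑ A ∈ X, ψ (- pairF C A) with hxf
  set yf : Matrix (Fin 3) (Fin 3) F → ℂ := fun C => ∑ B ∈ Y, ψ (pairF C B) with hyf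
  set lf : Matrix (Fin 3) (Fin 3) F → ℂ :=
    fun C => ∑ G : Matrix (Fin 3) (Fin 3) F, if IsUnit G then ψ (- pairF C G) else 0 with hlf
  set NU : ℕ := (Finset.univ.filter (fun G : Matrix (Fin 3) (Fin 3) F => IsUnit G)).card
    with hNUdef
  -- the key identity
  have hkey : ∑ C : Matrix (Fin 3) (Fin 3) F, yf C * xf C * lf C = 0 := by
    have hterm : ∀ C : Matrix (Fin 3) (Fin 3) F, yf C * xf C * lf C
        = ∑ B ∈ Y, ∑ A ∈ X, ∑ G : Matrix (Fin 3) (Fin 3) F,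
            (if IsUnit G then ψ (pairF C (B - A - G)) else 0) := by
      intro C
      show (∑ B ∈ Y, ψ (pairF C B)) * (∑ A ∈ X, ψ (- pairF C A)) * _ = _
      rw [Finset.sum_mul_sum, Finset.sum_mul]
      refine Finset.sum_congr rfl fun B _ => ?_
      rw [Finset.sum_mul]
      refine Finset.sum_congr rfl fun A _ => ?_
      rw [Finset.mul_sum]
      refine Finset.sum_congr rfl fun G _ => ?_
      rw [mul_ite, mul_zero]
      by_cases hG : IsUnit G
      · rw [if_pos hG, if_pos hG, pair_sub, pair_sub, sub_eq_add_neg, sub_eq_add_neg,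
          AddChar.map_add_eq_mul, AddChar.map_add_eq_mul]
      · rw [if_neg hG, if_neg hG]
    rw [Finset.sum_congr rfl fun C _ => hterm C, Finset.sum_comm]
    refine Finset.sum_eq_zero fun B hB => ?_
    rw [Finset.sum_comm]
    refine Finset.sum_eq_zero fun A hA => ?_
    rw [Finset.sum_comm]
    refine Finset.sum_eq_zero fun G _ => ?_
    by_cases hG : IsUnit G
    · rw [Finset.sum_congr rfl (fun C _ => if_pos hG)]
      refine sum_psi_pair hψ ?_
      intro h0
      have hBA : B - A = G := sub_eq_zero.mp h0
      exact (hcon A hA B hB) (hBA ▸ hG)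
    · rw [Finset.sum_congr rfl (fun C _ => if_neg hG)]
      simp
  -- value at 0
  have hx0 : xf 0 = (X.card : ℂ) := by
    show (∑ A ∈ X, ψ (- pairF 0 A)) = _
    rw [Finset.sum_congr rfl fun A _ => by rw [pair_zero, neg_zero, AddChar.map_zero_eq_one]]
    rw [Finset.sum_const, nsmul_eq_mul, mul_one]
  have hy0 : yf 0 = (Y.card : ℂ) := by
    show (∑ B ∈ Y, ψ (pairF 0 B)) = _
    rw [Finset.sum_congr rfl fun B _ => by rw [pair_zero, AddChar.map_zero_eq_one]]
    rw [Finset.sum_const, nsmul_eq_mul, mul_one]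
  have hl0 : lf 0 = (NU : ℂ) := by
    show (∑ G : Matrix (Fin 3) (Fin 3) F, if IsUnit G then ψ (- pairF 0 G) else 0) = _
    rw [Finset.sum_congr rfl fun G _ => by
      rw [pair_zero, neg_zero, AddChar.map_zero_eq_one]]
    rw [Finset.sum_boole]
  -- lf in terms of lam
  have hlam : ∀ C : Matrix (Fin 3) (Fin 3) F, lf C = lam ψ (-C) := by
    intro C
    show (∑ G : Matrix (Fin 3) (Fin 3) F, if IsUnit G then ψ (- pairF C G) else 0) = _
    unfold lam
    refine Finset.sum_congr rfl fun G _ => ?_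
    rw [pair_neg_left]
  set LR : ℝ := Q^3 * (Q - 1) * (Q^2 - 1) with hLR
  have hLR0 : 0 ≤ LR := by
    have : (0:ℝ) ≤ Q^3 := by positivity
    have h1 : (0:ℝ) ≤ Q - 1 := by linarith
    have h2 : (0:ℝ) ≤ Q^2 - 1 := by nlinarith
    exact mul_nonneg (mul_nonneg this h1) h2
  -- main bound
  have hmain : (X.card : ℝ) * Y.card * NU
      ≤ LR * ∑ C : Matrix (Fin 3) (Fin 3) F, norm (xf C) * norm (yf C) := by
    have h0sum : yf 0 * xf 0 * lf 0
        = - ∑ C ∈ Finset.univ.erase (0 : Matrix (Fin 3) (Fin 3) F), yf C * xf C * lf C := by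
      rw [← Finset.add_sum_erase _ _ (Finset.mem_univ (0 : Matrix (Fin 3) (Fin 3) F))] at hkey
      linear_combination hkey
    have habs : norm (yf 0 * xf 0 * lf 0) = (Y.card : ℝ) * X.card * NU := by
      rw [hx0, hy0, hl0, norm_mul, norm_mul, Complex.norm_natCast, Complex.norm_natCast,
        Complex.norm_natCast]
    calc (X.card : ℝ) * Y.card * NU = norm (yf 0 * xf 0 * lf 0) := by rw [habs]; ring
      _ = norm (∑ C ∈ Finset.univ.erase (0 : Matrix (Fin 3) (Fin 3) F),
            yf C * xf C * lf C) := by rw [h0sum, norm_neg]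
      _ ≤ ∑ C ∈ Finset.univ.erase (0 : Matrix (Fin 3) (Fin 3) F),
            norm (yf C * xf C * lf C) := norm_sum_le _ _
      _ ≤ ∑ C ∈ Finset.univ.erase (0 : Matrix (Fin 3) (Fin 3) F),
            LR * (norm (xf C) * norm (yf C)) := by
          refine Finset.sum_le_sum fun C hC => ?_
          have hC0 : C ≠ 0 := Finset.ne_of_mem_erase hC
          rw [norm_mul, norm_mul]
          have hbl : norm (lf C) ≤ LR := by
            rw [hlam C, hLR]
            exact lam_bound hψ (neg_ne_zero.mpr hC0)
          calc norm (yf C) * norm (xf C) * norm (lf C)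
              ≤ norm (yf C) * norm (xf C) * LR := by
                refine mul_le_mul_of_nonneg_left hbl ?_
                positivity
            _ = LR * (norm (xf C) * norm (yf C)) := by ring
      _ ≤ ∑ C : Matrix (Fin 3) (Fin 3) F, LR * (norm (xf C) * norm (yf C)) := by
          refine Finset.sum_le_sum_of_subset_of_nonneg (Finset.erase_subset _ _) ?_
          intro C _ _
          positivity
      _ = LR * ∑ C : Matrix (Fin 3) (Fin 3) F, norm (xf C) * norm (yf C) := by
          rw [Finset.mul_sum]
  -- Cauchy-Schwarz + Parseval
  have hParX : ∑ C : Matrix (Fin 3) (Fin 3) F, (norm (xf C))^2 = Q^9 * X.card :=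
    parseval hψ X
  have hParY : ∑ C : Matrix (Fin 3) (Fin 3) F, (norm (yf C))^2 = Q^9 * Y.card := by
    have hcy : ∀ C : Matrix (Fin 3) (Fin 3) F,
        norm (yf C) = norm (∑ B ∈ Y, ψ (- pairF C B)) := by
      intro C
      have : (starRingEnd ℂ) (yf C) = ∑ B ∈ Y, ψ (- pairF C B) := by
        show (starRingEnd ℂ) (∑ B ∈ Y, ψ (pairF C B)) = _
        rw [map_sum]
        exact Finset.sum_congr rfl fun B _ => psi_conj ψ _
      rw [← this, Complex.norm_conj]
    rw [Finset.sum_congr rfl fun C _ => by rw [hcy C]]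
    exact parseval hψ Y
  set S : ℝ := ∑ C : Matrix (Fin 3) (Fin 3) F, norm (xf C) * norm (yf C) with hS
  have hS0 : 0 ≤ S := Finset.sum_nonneg fun C _ => by positivity
  have hCS : S^2 ≤ (Q^9 * X.card) * (Q^9 * Y.card) := by
    rw [hS, ← hParX, ← hParY]
    exact Finset.sum_mul_sq_le_sq_mul_sq _ _ _
  set s : ℝ := Real.sqrt ((X.card : ℝ) * (Y.card : ℝ)) with hs
  have hsprod : s^2 = (X.card : ℝ) * Y.card := Real.sq_sqrt (by positivity)
  have hs0 : 0 < s := by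
    have : (0:ℝ) < Q ^ 6 + Q ^ 3 + 2 := by positivity
    linarith [h]
  have hSle : S ≤ Q^9 * s := by
    have h1 : S^2 ≤ (Q^9 * s)^2 := by
      calc S^2 ≤ (Q^9 * X.card) * (Q^9 * Y.card) := hCS
        _ = (Q^9)^2 * ((X.card : ℝ) * Y.card) := by ring
        _ = (Q^9 * s)^2 := by rw [← hsprod]; ring
    have h2 : (0:ℝ) ≤ Q^9 * s := by positivity
    nlinarith [hS0, h2, h1]
  -- cardinality of GL
  have hNUR : (NU : ℝ) = (Q^3 - 1) * (Q^3 - Q) * (Q^3 - Q^2) := by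
    rw [hNUdef, card_units_filter]
    have e1 : (1 : ℕ) ≤ Fintype.card F ^ 3 := Nat.one_le_pow _ _ (by omega)
    have e2 : Fintype.card F ≤ Fintype.card F ^ 3 :=
      Nat.le_self_pow (by omega) _
    have e3 : Fintype.card F ^ 2 ≤ Fintype.card F ^ 3 :=
      Nat.pow_le_pow_right (by omega) (by omega)
    push_cast [Nat.cast_sub e1, Nat.cast_sub e2, Nat.cast_sub e3]
    ring
  have hNUpos : (0 : ℝ) < NU := by
    have : (0:ℕ) < NU := by
      rw [hNUdef]
      refine Finset.card_pos.mpr ⟨1, Finset.mem_filter.mpr ⟨Finset.mem_univ _, isUnit_one⟩⟩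
    exact_mod_cast this
  -- final contradiction
  have hchain : s^2 * NU ≤ LR * (Q^9 * s) := by
    calc s^2 * (NU:ℝ) = (X.card : ℝ) * Y.card * NU := by rw [hsprod]
      _ ≤ LR * S := hmain
      _ ≤ LR * (Q^9 * s) := mul_le_mul_of_nonneg_left hSle hLR0
  have h1 : s * NU ≤ LR * Q^9 := by
    by_contra hgt
    push_neg at hgt
    nlinarith [mul_lt_mul_of_pos_left hgt hs0, hchain]
  have h2 : LR * Q^9 < (Q^6 + Q^3 + 2) * NU := by
    rw [hNUR, hLR]
    have f1 : (0:ℝ) < Q^3 := by positivity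
    have f2 : (0:ℝ) < Q^2 - 1 := by nlinarith
    have f3 : (0:ℝ) < Q - 1 := by linarith
    have f4 : (0:ℝ) < Q^3 - 2 := by nlinarith
    nlinarith [mul_pos f1 (mul_pos f2 (mul_pos f3 f4))]
  have h3 : (Q^6 + Q^3 + 2) * NU < s * NU :=
    mul_lt_mul_of_pos_right h hNUpos
  linarith
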